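/- Let u₁, u₂ be binary column vectors with equal Hamming weights such that for a given threshold w the DRS algorithm outputs the same number of vectors on inputs u₁ and u₂. Then the DRS algorithm also outputs the same number of vectors on inputs u₁ ⊗ [1,1]ᵀ and u₂ ⊗ [1,1]ᵀ, and on inputs u₁ ⊗ [0,1]ᵀ and u₂ ⊗ [0,1]ᵀ. -/

import Mathlib

/-- Hamming weight of a vector over `ZMod 2` represented as a list. -/
def wtH (l : List (ZMod 2)) : ℕ := l.countP (fun a => a ≠ 0)

/-- The DRS splitting algorithm on vectors of length `2^n` with weight threshold `w`. -/
def drs (w : ℕ) : ℕ → List (ZMod 2) → List (List (ZMod 2))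
  | 0, x => if wtH x = 0 then [] else [x]
  | n + 1, x =>
      if wtH x = 0 then []
      else if wtH x ≤ w then [x]
      else ((drs w n (x.take (2 ^ n))).map (fun y => y ++ List.replicate (2 ^ n) 0)) ++
           ((drs w n (x.drop (2 ^ n))).map (fun y => List.replicate (2 ^ n) (0 : ZMod 2) ++ y))

lemma wtH_append (a b : List (ZMod 2)) : wtH (a ++ b) = wtH a + wtH b := by
  simp [wtH, List.countP_append]

lemma wtH_replicate (m : ℕ) : wtH (List.replicate m (0 : ZMod 2)) = 0 := by
  simp [wtH, List.countP_eq_zero]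

lemma drs_zero_wt (w n : ℕ) (x : List (ZMod 2)) (h : wtH x = 0) : drs w n x = [] := by
  cases n <;> simp [drs, h]

/-- If `u₁, u₂` have equal length `2^n`, equal Hamming weight, and the DRS algorithm
outputs the same number of vectors on them, then it also outputs the same number of
vectors on `u₁ ⊗ [1,1]ᵀ = (u₁, u₁)` and `u₂ ⊗ [1,1]ᵀ`, and on
`u₁ ⊗ [0,1]ᵀ = (0, u₁)` and `u₂ ⊗ [0,1]ᵀ`. -/
theorem drs_count_kron_step (w n : ℕ) (u₁ u₂ : List (ZMod 2))
    (h₁ : u₁.length = 2 ^ n) (h₂ : u₂.length = 2 ^ n)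
    (hw : wtH u₁ = wtH u₂)
    (hcount : (drs w n u₁).length = (drs w n u₂).length) :
    (drs w (n + 1) (u₁ ++ u₁)).length = (drs w (n + 1) (u₂ ++ u₂)).length ∧
    (drs w (n + 1) (List.replicate (2 ^ n) (0 : ZMod 2) ++ u₁)).length =
      (drs w (n + 1) (List.replicate (2 ^ n) (0 : ZMod 2) ++ u₂)).length := by
  have t₁ : (u₁ ++ u₁).take (2 ^ n) = u₁ := List.take_left' h₁
  have d₁ : (u₁ ++ u₁).drop (2 ^ n) = u₁ := List.drop_left' h₁
  have t₂ : (u₂ ++ u₂).take (2 ^ n) = u₂ := List.take_left' h₂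
  have d₂ : (u₂ ++ u₂).drop (2 ^ n) = u₂ := List.drop_left' h₂
  have rl : (List.replicate (2 ^ n) (0 : ZMod 2)).length = 2 ^ n := List.length_replicate
  have t₁' : (List.replicate (2 ^ n) (0 : ZMod 2) ++ u₁).take (2 ^ n)
      = List.replicate (2 ^ n) (0 : ZMod 2) := List.take_left' rl
  have d₁' : (List.replicate (2 ^ n) (0 : ZMod 2) ++ u₁).drop (2 ^ n) = u₁ :=
    List.drop_left' rl
  have t₂' : (List.replicate (2 ^ n) (0 : ZMod 2) ++ u₂).take (2 ^ n)
      = List.replicate (2 ^ n) (0 : ZMod 2) := List.take_left' rl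
  have d₂' : (List.replicate (2 ^ n) (0 : ZMod 2) ++ u₂).drop (2 ^ n) = u₂ :=
    List.drop_left' rl
  constructor
  · simp only [drs, wtH_append, hw, t₁, d₁, t₂, d₂]
    split
    · rfl
    · split
      · rfl
      · simp [hcount]
  · simp only [drs, wtH_append, wtH_replicate, hw, t₁', d₁', t₂', d₂']
    split
    · rfl
    · split
      · rfl
      · simp [hcount, drs_zero_wt w n _ (wtH_replicate (2 ^ n))]
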